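/- For every function u : ℝ → ℝ that is twice weakly differentiable with u ∈ L²(ℝ) and u'' ∈ L²(ℝ), one has the Gabushin-type interpolation inequality ‖u'‖_{L^{10/3}(ℝ)} ≤ C ‖u‖_{L²(ℝ)}^{2/5} ‖u''‖_{L²(ℝ)}^{3/5} for some universal constant C > 0. -/

import Mathlib

open MeasureTheory Set ENNReal NNReal

open Filter
section GabushinAux


lemma integrable_mul2 {f g : ℝ → ℝ} (hf : MemLp f 2 (volume : Measure ℝ))
    (hg : MemLp g 2 (volume : Measure ℝ)) : Integrable (fun x => f x * g x) volume := by
  have hb : Integrable (fun x => (f x ^ 2 + g x ^ 2) / 2) volume :=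
    (hf.integrable_sq.add hg.integrable_sq).div_const 2
  refine hb.mono' (hf.aestronglyMeasurable.mul hg.aestronglyMeasurable) ?_
  filter_upwards with x
  rw [Real.norm_eq_abs, abs_mul]
  nlinarith [sq_nonneg (|f x| - |g x|), abs_nonneg (f x), abs_nonneg (g x),
    sq_abs (f x), sq_abs (g x)]

lemma norm_rpow_two (t : ℝ) : ‖t‖ ^ (2:ℝ) = t ^ 2 := by
  rw [show (2:ℝ) = ((2:ℕ):ℝ) by norm_num, Real.rpow_natCast, Real.norm_eq_abs, sq_abs]

lemma l2norm_eq {f : ℝ → ℝ} (hf : MemLp f 2 (volume : Measure ℝ)) :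
    (eLpNorm f 2 volume).toReal = Real.sqrt (∫ x, f x ^ 2) := by
  rw [hf.eLpNorm_eq_integral_rpow_norm two_ne_zero ENNReal.ofNat_ne_top,
    ENNReal.toReal_ofReal (by positivity)]
  have h2 : (2 : ℝ≥0∞).toReal = (2 : ℝ) := by simp
  rw [h2]
  have h3 : (∫ x, ‖f x‖ ^ (2:ℝ)) = ∫ x, f x ^ 2 := by
    congr 1; funext x; exact norm_rpow_two (f x)
  rw [h3, Real.sqrt_eq_rpow, one_div]

lemma cs_abs {f g : ℝ → ℝ} (hf : MemLp f 2 (volume : Measure ℝ))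
    (hg : MemLp g 2 (volume : Measure ℝ)) :
    ∫ x, |f x * g x| ≤ Real.sqrt (∫ x, f x ^ 2) * Real.sqrt (∫ x, g x ^ 2) := by
  have hint : Integrable (fun x => f x * g x) volume := integrable_mul2 hf hg
  have holder : eLpNorm (fun x => f x * g x) 1 volume ≤
      eLpNorm f 2 volume * eLpNorm g 2 volume := by
    have := eLpNorm_le_eLpNorm_mul_eLpNorm_of_nnnorm (p := 2) (q := 2) (r := 1)
      hf.aestronglyMeasurable hg.aestronglyMeasurable (· * ·) 1 ?_
    · simpa using this
    · filter_upwards with x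
      simp [nnnorm_mul]
  have h1 : eLpNorm (fun x => f x * g x) 1 volume
      = ENNReal.ofReal (∫ x, |f x * g x|) := by
    rw [(memLp_one_iff_integrable.2 hint).eLpNorm_eq_integral_rpow_norm one_ne_zero
      ENNReal.one_ne_top]
    simp [Real.norm_eq_abs, abs_mul]
  have hfin : eLpNorm f 2 volume * eLpNorm g 2 volume ≠ ∞ :=
    ENNReal.mul_ne_top hf.eLpNorm_ne_top hg.eLpNorm_ne_top
  have := ENNReal.toReal_mono hfin holder
  rw [h1, ENNReal.toReal_ofReal (by positivity), ENNReal.toReal_mul,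
    l2norm_eq hf, l2norm_eq hg] at this
  exact this

lemma abs_integral_le_l2 {f g : ℝ → ℝ} (hf : MemLp f 2 (volume : Measure ℝ))
    (hg : MemLp g 2 (volume : Measure ℝ)) :
    |∫ x, f x * g x| ≤ Real.sqrt (∫ x, f x ^ 2) * Real.sqrt (∫ x, g x ^ 2) :=
  by
  have h := norm_integral_le_integral_norm (μ := (volume : Measure ℝ)) (fun x => f x * g x)
  simp only [Real.norm_eq_abs] at h
  exact h.trans (cs_abs hf hg)


lemma one_sided (u u' u'' : ℝ → ℝ)
    (hu : ∀ x, HasDerivAt u (u' x) x)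
    (hu' : ∀ x, HasDerivAt u' (u'' x) x)
    (hu2 : MemLp u 2 (volume : Measure ℝ))
    (hu''2 : MemLp u'' 2 (volume : Measure ℝ)) :
    IntegrableOn (fun x => u' x ^ 2) (Ioi 0) volume := by
  have contu : Continuous u := continuous_iff_continuousAt.2 fun x => (hu x).continuousAt
  have contu' : Continuous u' := continuous_iff_continuousAt.2 fun x => (hu' x).continuousAt
  set g : ℝ → ℝ := fun x => u x * u' x with hgdef
  have hmul : Integrable (fun x => u x * u'' x) volume := integrable_mul2 hu2 hu''2
  set M : ℝ := ∫ x, |u x * u'' x| with hM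
  have hM0 : 0 ≤ M := integral_nonneg fun x => abs_nonneg _
  have husq : Integrable (fun x => u x * u x) volume := integrable_mul2 hu2 hu2
  set Iu : ℝ := ∫ x, u x * u x with hIu
  have hIu0 : 0 ≤ Iu := integral_nonneg fun x => mul_self_nonneg _
  have ii_u'sq : ∀ a b : ℝ, IntervalIntegrable (fun x => u' x * u' x) volume a b :=
    fun a b => (contu'.mul contu').intervalIntegrable a b
  have ii_mul : ∀ a b : ℝ, IntervalIntegrable (fun x => u x * u'' x) volume a b :=
    fun a b => hmul.intervalIntegrable
  have ftc : ∀ b : ℝ, (∫ x in (0:ℝ)..b, u' x * u' x) + (∫ x in (0:ℝ)..b, u x * u'' x)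
      = g b - g 0 := by
    intro b
    rw [← intervalIntegral.integral_add (ii_u'sq 0 b) (ii_mul 0 b)]
    exact intervalIntegral.integral_eq_sub_of_hasDerivAt
      (fun x _ => (hu x).mul (hu' x)) ((ii_u'sq 0 b).add (ii_mul 0 b))
  have hMb : ∀ a b : ℝ, |∫ x in a..b, u x * u'' x| ≤ M := by
    intro a b
    have h1 : |∫ x in a..b, u x * u'' x| ≤ ∫ x in Set.uIoc a b, |u x * u'' x| := by
      have := intervalIntegral.norm_integral_le_integral_norm_uIoc
        (f := fun x => u x * u'' x) (a := a) (b := b) (μ := volume)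
      simp only [Real.norm_eq_abs] at this
      exact this
    refine h1.trans ?_
    exact setIntegral_le_integral hmul.abs (Filter.Eventually.of_forall fun x => abs_nonneg _)
  have claim : ∀ b : ℝ, (∫ x in (0:ℝ)..b, u' x * u' x) ≤ |g 0| + M + 1 := by
    by_contra hcon
    push_neg at hcon
    obtain ⟨b₀, hb₀⟩ := hcon
    have key : ∀ x, b₀ ≤ x → 1 ≤ g x := by
      intro x hx
      have madd := intervalIntegral.integral_add_adjacent_intervals (ii_u'sq 0 b₀) (ii_u'sq b₀ x)
      have pos : 0 ≤ ∫ t in b₀..x, u' t * u' t :=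
        intervalIntegral.integral_nonneg hx (fun t _ => mul_self_nonneg _)
      have hfx := ftc x
      have habs := abs_le.1 (hMb 0 x)
      have hg0 := neg_abs_le (g 0)
      linarith
    have grow : ∀ x, b₀ ≤ x → 2*(x - b₀) ≤ u x * u x := by
      intro x hx
      have ftc2 : (∫ t in b₀..x, (u' t * u t + u t * u' t)) = u x * u x - u b₀ * u b₀ :=
        intervalIntegral.integral_eq_sub_of_hasDerivAt (fun t _ => (hu t).mul (hu t))
          (((contu'.mul contu).add (contu.mul contu')).intervalIntegrable _ _)
      have lower : (∫ t in b₀..x, (2:ℝ)) ≤ ∫ t in b₀..x, (u' t * u t + u t * u' t) := by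
        refine intervalIntegral.integral_mono_on hx intervalIntegrable_const
          (((contu'.mul contu).add (contu.mul contu')).intervalIntegrable _ _) ?_
        intro t ht
        have h1 := key t ht.1
        simp only [hgdef] at h1
        have h2 : u' t * u t + u t * u' t = 2*(u t * u' t) := by ring
        linarith
      rw [intervalIntegral.integral_const, smul_eq_mul] at lower
      nlinarith [mul_self_nonneg (u b₀)]
    set B : ℝ := b₀ + Iu + 1 with hB
    have hbB : b₀ ≤ B := by simp [hB]; linarith
    have low2 : (∫ x in b₀..B, 2*(x - b₀)) ≤ ∫ x in b₀..B, u x * u x := by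
      refine intervalIntegral.integral_mono_on hbB
        (by apply Continuous.intervalIntegrable; continuity)
        ((contu.mul contu).intervalIntegrable _ _) ?_
      exact fun x hx => grow x hx.1
    have eval : (∫ x in b₀..B, 2*(x - b₀)) = (B - b₀)^2 := by
      have hd : ∀ x : ℝ, HasDerivAt (fun y => (y - b₀)^2) (2*(x - b₀)) x := by
        intro x
        simpa [Function.comp_def, Pi.pow_def] using (((hasDerivAt_id x).sub_const b₀).pow 2)
      rw [intervalIntegral.integral_eq_sub_of_hasDerivAt (fun x _ => hd x)
        (by apply Continuous.intervalIntegrable; continuity)]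
      simp
    have upper : (∫ x in b₀..B, u x * u x) ≤ Iu := by
      rw [intervalIntegral.integral_of_le hbB]
      exact setIntegral_le_integral husq (Filter.Eventually.of_forall fun x => mul_self_nonneg _)
    have hBb : B - b₀ = Iu + 1 := by simp [hB]; ring
    nlinarith [low2, eval, upper, hIu0, hBb]
  refine integrableOn_Ioi_of_intervalIntegral_norm_bounded (μ := volume)
    (f := fun x => u' x ^ 2) (b := fun i : ℝ => i) (l := atTop) (|g 0| + M + 1) 0
    (fun i => (contu'.pow 2).integrableOn_Ioc) tendsto_id ?_
  filter_upwards with i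
  have : (∫ x in (0:ℝ)..i, ‖u' x ^ 2‖) = ∫ x in (0:ℝ)..i, u' x * u' x := by
    refine intervalIntegral.integral_congr fun x _ => ?_
    simp [Real.norm_eq_abs, abs_of_nonneg (sq_nonneg (u' x)), sq]
  rw [this]
  exact claim i


lemma memLp_comp_neg {f : ℝ → ℝ} {p : ℝ≥0∞} (hf : MemLp f p (volume : Measure ℝ)) :
    MemLp (fun x => f (-x)) p (volume : Measure ℝ) :=
  hf.comp_measurePreserving (Measure.measurePreserving_neg _)

lemma memLp_deriv (u u' u'' : ℝ → ℝ)
    (hu : ∀ x, HasDerivAt u (u' x) x)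
    (hu' : ∀ x, HasDerivAt u' (u'' x) x)
    (hu2 : MemLp u 2 (volume : Measure ℝ))
    (hu''2 : MemLp u'' 2 (volume : Measure ℝ)) :
    MemLp u' 2 (volume : Measure ℝ) := by
  have contu' : Continuous u' := continuous_iff_continuousAt.2 fun x => (hu' x).continuousAt
  have hpos := one_sided u u' u'' hu hu' hu2 hu''2
  -- reflected functions
  have hv : ∀ x : ℝ, HasDerivAt (fun y => u (-y)) (-(u' (-x))) x := by
    intro x
    simpa [Function.comp_def] using (hu (-x)).comp x (hasDerivAt_neg x)
  have hv' : ∀ x : ℝ, HasDerivAt (fun y => -(u' (-y))) (u'' (-x)) x := by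
    intro x
    have := ((hu' (-x)).comp x (hasDerivAt_neg x)).neg
    simpa [Function.comp_def, Pi.neg_def] using this
  have hneg := one_sided (fun y => u (-y)) (fun y => -(u' (-y))) (fun y => u'' (-y))
    hv hv' (memLp_comp_neg hu2) (memLp_comp_neg hu''2)
  have hneg' : IntegrableOn (fun x : ℝ => u' (-x) ^ 2) (Ioi 0) volume := by
    simpa using hneg
  have hIio : IntegrableOn (fun x => u' x ^ 2) (Iio 0) volume := by
    have := (MeasurePreserving.integrableOn_comp_preimage
      (Measure.measurePreserving_neg (volume : Measure ℝ))
      (Homeomorph.neg ℝ).measurableEmbedding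
      (f := fun x : ℝ => u' x ^ 2) (s := Iio 0)).1
    apply this
    have hpre : (fun x : ℝ => -x) ⁻¹' (Iio 0) = Ioi 0 := by
      ext x; simp
    rw [show (Neg.neg : ℝ → ℝ) = fun x : ℝ => -x from rfl, hpre]
    exact hneg'
  have hint : Integrable (fun x => u' x ^ 2) volume := by
    have hIci : IntegrableOn (fun x => u' x ^ 2) (Ici 0) volume :=
      (integrableOn_Ici_iff_integrableOn_Ioi).2 hpos
    have := hIio.union hIci
    rwa [Iio_union_Ici, integrableOn_univ] at this
  exact (memLp_two_iff_integrable_sq contu'.aestronglyMeasurable).2 hint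


section
variable (u u' u'' : ℝ → ℝ)
  (hu : ∀ x, HasDerivAt u (u' x) x)
  (hu' : ∀ x, HasDerivAt u' (u'' x) x)
  (hu2 : MemLp u 2 (volume : Measure ℝ))
  (hu'2 : MemLp u' 2 (volume : Measure ℝ))
  (hu''2 : MemLp u'' 2 (volume : Measure ℝ))

include hu hu' hu2 hu'2 hu''2

-- key fact 1 : ∫ u'^2 ≤ √(∫u²) √(∫u''²)
lemma fact1 : (∫ x, u' x ^ 2) ≤ Real.sqrt (∫ x, u x ^ 2) * Real.sqrt (∫ x, u'' x ^ 2) := by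
  have hg' : ∀ x, HasDerivAt (fun y => u y * u' y) (u' x * u' x + u x * u'' x) x :=
    fun x => (hu x).mul (hu' x)
  have hgint : Integrable (fun x => u x * u' x) volume := integrable_mul2 hu2 hu'2
  have hmulint : Integrable (fun x => u x * u'' x) volume := integrable_mul2 hu2 hu''2
  have hu'sq : Integrable (fun x => u' x * u' x) volume := integrable_mul2 hu'2 hu'2
  have hg'int : Integrable (fun x => u' x * u' x + u x * u'' x) volume := hu'sq.add hmulint
  have htop : Tendsto (fun x => u x * u' x) atTop (nhds 0) :=
    tendsto_zero_of_hasDerivAt_of_integrableOn_Ioi (a := 0)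
      (fun x _ => hg' x) hg'int.integrableOn hgint.integrableOn
  have hbot : Tendsto (fun x => u x * u' x) atBot (nhds 0) :=
    tendsto_zero_of_hasDerivAt_of_integrableOn_Iic (a := 0)
      (fun x _ => hg' x) hg'int.integrableOn hgint.integrableOn
  have hzero : (∫ x, (u' x * u' x + u x * u'' x)) = 0 := by
    rw [integral_of_hasDerivAt_of_tendsto hg' hg'int hbot htop]
    simp
  rw [integral_add hu'sq hmulint] at hzero
  have h1 : (∫ x, u' x * u' x) = - ∫ x, u x * u'' x := by linarith
  have h2 : (∫ x, u' x ^ 2) = ∫ x, u' x * u' x := by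
    congr 1; funext x; ring
  rw [h2, h1]
  calc - ∫ x, u x * u'' x ≤ |∫ x, u x * u'' x| := neg_le_abs _
    _ ≤ _ := abs_integral_le_l2 hu2 hu''2

-- key fact 2 : sup bound
lemma fact2 : ∀ x, u' x ^ 2 ≤
    2 * (Real.sqrt (∫ x, u' x ^ 2) * Real.sqrt (∫ x, u'' x ^ 2)) := by
  intro x
  have hd : ∀ y, HasDerivAt (fun t => u' t ^ 2) (2 * (u' y * u'' y)) y := by
    intro y
    have h := (hu' y).pow 2
    have : ((2:ℕ):ℝ) * u' y ^ (2-1) * u'' y = 2 * (u' y * u'' y) := by push_cast; ring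
    rwa [this] at h
  have hmul : Integrable (fun y => u' y * u'' y) volume := integrable_mul2 hu'2 hu''2
  have hd'int : Integrable (fun y => 2 * (u' y * u'' y)) volume := hmul.const_mul 2
  have hsq : Integrable (fun y => u' y ^ 2) volume := hu'2.integrable_sq
  have htop : Tendsto (fun y => u' y ^ 2) atTop (nhds 0) :=
    tendsto_zero_of_hasDerivAt_of_integrableOn_Ioi (a := 0)
      (fun y _ => hd y) hd'int.integrableOn hsq.integrableOn
  have hftc : (∫ y in Ioi x, 2 * (u' y * u'' y)) = 0 - u' x ^ 2 :=
    integral_Ioi_of_hasDerivAt_of_tendsto' (fun y _ => hd y) hd'int.integrableOn htop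
  have h1 : u' x ^ 2 = - ∫ y in Ioi x, 2 * (u' y * u'' y) := by linarith
  rw [h1]
  calc - ∫ y in Ioi x, 2 * (u' y * u'' y)
      ≤ |∫ y in Ioi x, 2 * (u' y * u'' y)| := neg_le_abs _
    _ ≤ ∫ y in Ioi x, |2 * (u' y * u'' y)| := by
        have := norm_integral_le_integral_norm (μ := volume.restrict (Ioi x))
          (fun y => 2 * (u' y * u'' y))
        simp only [Real.norm_eq_abs] at this
        exact this
    _ ≤ ∫ y, |2 * (u' y * u'' y)| :=
        setIntegral_le_integral hd'int.abs (Filter.Eventually.of_forall fun y => abs_nonneg _)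
    _ = 2 * ∫ y, |u' y * u'' y| := by
        rw [← MeasureTheory.integral_const_mul]
        congr 1; funext y
        rw [abs_mul, abs_two]
    _ ≤ 2 * (Real.sqrt (∫ y, u' y ^ 2) * Real.sqrt (∫ y, u'' y ^ 2)) := by
        have := cs_abs hu'2 hu''2
        linarith

end


-- pointwise bound
lemma pt_bound {t s : ℝ} (hs : t ^ 2 ≤ s) :
    |t| ^ ((10:ℝ)/3) ≤ s ^ ((2:ℝ)/3) * t ^ 2 := by
  have e1 : |t| ^ ((10:ℝ)/3) = (t ^ 2) ^ ((5:ℝ)/3) := by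
    rw [show t ^ 2 = |t| ^ ((2:ℕ):ℝ) by rw [Real.rpow_natCast, sq_abs],
      ← Real.rpow_mul (abs_nonneg t)]
    norm_num
  have e2 : (t ^ 2) ^ ((5:ℝ)/3) = (t ^ 2) ^ ((2:ℝ)/3) * t ^ 2 := by
    rw [show (5:ℝ)/3 = 2/3 + 1 by norm_num, Real.rpow_add' (sq_nonneg t) (by norm_num),
      Real.rpow_one]
  rw [e1, e2]
  exact mul_le_mul_of_nonneg_right
    (Real.rpow_le_rpow (sq_nonneg t) hs (by norm_num)) (sq_nonneg t)

-- real algebra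
lemma real_algebra {a b c T : ℝ} (ha0 : 0 ≤ a) (hb0 : 0 ≤ b) (hc0 : 0 ≤ c) (hT0 : 0 ≤ T)
    (hb2 : b ^ 2 ≤ a * c) (hT : T ≤ (2 * (b * c)) ^ ((2:ℝ)/3) * (a * c)) :
    T ^ ((10:ℝ)/3)⁻¹ ≤ 2 * a ^ ((2:ℝ)/5) * c ^ ((3:ℝ)/5) := by
  have hac0 : 0 ≤ a * c := mul_nonneg ha0 hc0
  have hTle : T ≤ 2 ^ ((2:ℝ)/3) * a ^ ((4:ℝ)/3) * c ^ (2:ℝ) := by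
    have hS : (2 * (b * c)) ^ ((2:ℝ)/3) = 2 ^ ((2:ℝ)/3) * b ^ ((2:ℝ)/3) * c ^ ((2:ℝ)/3) := by
      rw [Real.mul_rpow (by norm_num) (mul_nonneg hb0 hc0), Real.mul_rpow hb0 hc0, mul_assoc]
    have hb23 : b ^ ((2:ℝ)/3) ≤ a ^ ((1:ℝ)/3) * c ^ ((1:ℝ)/3) := by
      have e : b ^ ((2:ℝ)/3) = (b ^ 2) ^ ((1:ℝ)/3) := by
        rw [show b ^ 2 = b ^ ((2:ℕ):ℝ) by rw [Real.rpow_natCast], ← Real.rpow_mul hb0]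
        norm_num
      rw [e, ← Real.mul_rpow ha0 hc0]
      exact Real.rpow_le_rpow (sq_nonneg b) hb2 (by norm_num)
    have step : (2 * (b * c)) ^ ((2:ℝ)/3) * (a * c)
        ≤ 2 ^ ((2:ℝ)/3) * (a ^ ((1:ℝ)/3) * c ^ ((1:ℝ)/3)) * c ^ ((2:ℝ)/3) * (a * c) := by
      rw [hS]
      have h1 : 2 ^ ((2:ℝ)/3) * b ^ ((2:ℝ)/3) * c ^ ((2:ℝ)/3)
          ≤ 2 ^ ((2:ℝ)/3) * (a ^ ((1:ℝ)/3) * c ^ ((1:ℝ)/3)) * c ^ ((2:ℝ)/3) := by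
        apply mul_le_mul_of_nonneg_right _ (Real.rpow_nonneg hc0 _)
        exact mul_le_mul_of_nonneg_left hb23 (Real.rpow_nonneg (by norm_num) _)
      exact mul_le_mul_of_nonneg_right h1 hac0
    have heq : 2 ^ ((2:ℝ)/3) * (a ^ ((1:ℝ)/3) * c ^ ((1:ℝ)/3)) * c ^ ((2:ℝ)/3) * (a * c)
        = 2 ^ ((2:ℝ)/3) * a ^ ((4:ℝ)/3) * c ^ (2:ℝ) := by
      have ea : a ^ ((4:ℝ)/3) = a ^ ((1:ℝ)/3) * a := by
        rw [show (4:ℝ)/3 = 1/3 + 1 by norm_num, Real.rpow_add' ha0 (by norm_num), Real.rpow_one]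
      have e1 : c ^ ((1:ℝ)/3) * c ^ ((2:ℝ)/3) = c := by
        rw [← Real.rpow_add' hc0 (by norm_num)]; norm_num
      have ec : c ^ (2:ℝ) = c * c := by
        rw [show (2:ℝ) = ((2:ℕ):ℝ) by norm_num, Real.rpow_natCast]; ring
      rw [ea, ec]
      linear_combination (2 ^ ((2:ℝ)/3) * a ^ ((1:ℝ)/3) * a * c) * e1
    calc T ≤ (2 * (b * c)) ^ ((2:ℝ)/3) * (a * c) := hT
      _ ≤ _ := step
      _ = _ := heq
  have h1 : T ^ ((10:ℝ)/3)⁻¹ ≤ (2 ^ ((2:ℝ)/3) * a ^ ((4:ℝ)/3) * c ^ (2:ℝ)) ^ ((10:ℝ)/3)⁻¹ :=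
    Real.rpow_le_rpow hT0 hTle (by norm_num)
  refine h1.trans ?_
  have h2 : (2 ^ ((2:ℝ)/3) * a ^ ((4:ℝ)/3) * c ^ (2:ℝ)) ^ ((10:ℝ)/3)⁻¹
      = 2 ^ ((1:ℝ)/5) * a ^ ((2:ℝ)/5) * c ^ ((3:ℝ)/5) := by
    rw [Real.mul_rpow (mul_nonneg (Real.rpow_nonneg (by norm_num) _) (Real.rpow_nonneg ha0 _))
        (Real.rpow_nonneg hc0 _),
      Real.mul_rpow (Real.rpow_nonneg (by norm_num) _) (Real.rpow_nonneg ha0 _),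
      ← Real.rpow_mul (by norm_num : (0:ℝ) ≤ 2), ← Real.rpow_mul ha0, ← Real.rpow_mul hc0]
    norm_num
  rw [h2]
  have h3 : (2:ℝ) ^ ((1:ℝ)/5) ≤ 2 := by
    nth_rewrite 2 [show (2:ℝ) = 2 ^ (1:ℝ) by rw [Real.rpow_one]]
    exact Real.rpow_le_rpow_of_exponent_le (by norm_num) (by norm_num)
  apply mul_le_mul_of_nonneg_right _ (Real.rpow_nonneg hc0 _)
  exact mul_le_mul_of_nonneg_right h3 (Real.rpow_nonneg ha0 _)


end GabushinAux

/-- Gabushin-type interpolation inequality on the real line: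
`‖u'‖_{L^{10/3}} ≤ C ‖u‖_{L²}^{2/5} ‖u''‖_{L²}^{3/5}` for `u ∈ W^{2,2}(ℝ)`. -/
theorem gabushin_inequality_real_line :
    ∃ C : ℝ≥0, 0 < C ∧ ∀ (u u' u'' : ℝ → ℝ),
      (∀ x, HasDerivAt u (u' x) x) →
      (∀ x, HasDerivAt u' (u'' x) x) →
      MemLp u 2 (volume : Measure ℝ) →
      MemLp u'' 2 (volume : Measure ℝ) →
      eLpNorm u' (10/3) (volume : Measure ℝ) ≤
        (C : ℝ≥0∞) * eLpNorm u 2 (volume : Measure ℝ) ^ ((2:ℝ)/5) *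
          eLpNorm u'' 2 (volume : Measure ℝ) ^ ((3:ℝ)/5) := by
  refine ⟨2, by norm_num, ?_⟩
  intro u u' u'' hu hu' hu2 hu''2
  have contu' : Continuous u' := continuous_iff_continuousAt.2 fun x => (hu' x).continuousAt
  have hu'2 : MemLp u' 2 (volume : Measure ℝ) := memLp_deriv u u' u'' hu hu' hu2 hu''2
  set a := Real.sqrt (∫ x, u x ^ 2) with hadef
  set b := Real.sqrt (∫ x, u' x ^ 2) with hbdef
  set c := Real.sqrt (∫ x, u'' x ^ 2) with hcdef
  have ha0 : 0 ≤ a := Real.sqrt_nonneg _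
  have hb0 : 0 ≤ b := Real.sqrt_nonneg _
  have hc0 : 0 ≤ c := Real.sqrt_nonneg _
  have hb2 : b ^ 2 = ∫ x, u' x ^ 2 := Real.sq_sqrt (integral_nonneg fun x => sq_nonneg _)
  have f1 : (∫ x, u' x ^ 2) ≤ a * c := fact1 u u' u'' hu hu' hu2 hu'2 hu''2
  have f2 : ∀ x, u' x ^ 2 ≤ 2 * (b * c) := fact2 u u' u'' hu hu' hu2 hu'2 hu''2
  have hS0 : (0:ℝ) ≤ 2 * (b * c) := by positivity
  have hpt : ∀ x, |u' x| ^ ((10:ℝ)/3) ≤ (2 * (b * c)) ^ ((2:ℝ)/3) * u' x ^ 2 :=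
    fun x => pt_bound (f2 x)
  have hsqint : Integrable (fun x => u' x ^ 2) volume := hu'2.integrable_sq
  have hintpow : Integrable (fun x => |u' x| ^ ((10:ℝ)/3)) volume := by
    refine (hsqint.const_mul ((2 * (b * c)) ^ ((2:ℝ)/3))).mono' ?_ ?_
    · exact ((contu'.abs).rpow_const fun x => Or.inr (by norm_num)).aestronglyMeasurable
    · filter_upwards with x
      rw [Real.norm_eq_abs, abs_of_nonneg (Real.rpow_nonneg (abs_nonneg _) _)]
      exact hpt x
  set T := ∫ x, |u' x| ^ ((10:ℝ)/3) with hTdef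
  have hT0 : 0 ≤ T := integral_nonneg fun x => Real.rpow_nonneg (abs_nonneg _) _
  have f3 : T ≤ (2 * (b * c)) ^ ((2:ℝ)/3) * (a * c) := by
    have step1 : T ≤ ∫ x, (2 * (b * c)) ^ ((2:ℝ)/3) * u' x ^ 2 := by
      refine integral_mono hintpow (hsqint.const_mul _) hpt
    rw [MeasureTheory.integral_const_mul] at step1
    have step2 := mul_le_mul_of_nonneg_left f1 (Real.rpow_nonneg hS0 ((2:ℝ)/3))
    linarith
  -- MemLp u' (10/3)
  have h0 : (10/3 : ℝ≥0∞) ≠ 0 := by simp [ENNReal.div_eq_zero_iff]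
  have htopne : (10/3 : ℝ≥0∞) ≠ ∞ := by simp [ENNReal.div_eq_top]
  have htR : ((10 : ℝ≥0∞)/3).toReal = (10:ℝ)/3 := by
    rw [ENNReal.toReal_div]; norm_num
  have hmem : MemLp u' (10/3 : ℝ≥0∞) volume := by
    refine (memLp_norm_rpow_iff (p := 10/3) (q := 10/3)
      contu'.aestronglyMeasurable h0 htopne).1 ?_
    rw [ENNReal.div_self h0 htopne, memLp_one_iff_integrable]
    have he : (fun x => ‖u' x‖ ^ ((10 : ℝ≥0∞)/3).toReal) = fun x => |u' x| ^ ((10:ℝ)/3) := by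
      funext x; rw [htR, Real.norm_eq_abs]
    rw [he]; exact hintpow
  have heq : eLpNorm u' (10/3) volume = ENNReal.ofReal (T ^ ((10:ℝ)/3)⁻¹) := by
    rw [hmem.eLpNorm_eq_integral_rpow_norm h0 htopne]
    congr 1
    rw [htR, hTdef]
    simp only [Real.norm_eq_abs]
  -- RHS
  have hu2e : eLpNorm u 2 volume = ENNReal.ofReal a := by
    rw [← ENNReal.ofReal_toReal hu2.eLpNorm_ne_top, l2norm_eq hu2]
  have hu''2e : eLpNorm u'' 2 volume = ENNReal.ofReal c := by
    rw [← ENNReal.ofReal_toReal hu''2.eLpNorm_ne_top, l2norm_eq hu''2]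
  have hRHS : ((2:ℝ≥0) : ℝ≥0∞) * eLpNorm u 2 volume ^ ((2:ℝ)/5) *
      eLpNorm u'' 2 volume ^ ((3:ℝ)/5)
      = ENNReal.ofReal (2 * a ^ ((2:ℝ)/5) * c ^ ((3:ℝ)/5)) := by
    rw [hu2e, hu''2e, ENNReal.ofReal_rpow_of_nonneg ha0 (by norm_num : (0:ℝ) ≤ 2/5),
      ENNReal.ofReal_rpow_of_nonneg hc0 (by norm_num : (0:ℝ) ≤ 3/5),
      show ((2:ℝ≥0) : ℝ≥0∞) = ENNReal.ofReal 2 by norm_num,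
      ← ENNReal.ofReal_mul (by norm_num : (0:ℝ) ≤ 2), ← ENNReal.ofReal_mul (by positivity)]
  rw [heq, hRHS]
  exact ENNReal.ofReal_le_ofReal
    (real_algebra ha0 hb0 hc0 hT0 (by rw [hb2]; exact f1) f3)
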